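/- The pair (E₁, M₁) = (Surj ∩ Inj ∩ Inv, Tot) is a factorization system on Kl(T_M): (i) every Kleisli morphism f : X → Option (M × Z) factors as m ∘ e (Kleisli composition) with e in Surj ∩ Inj ∩ Inv and m in Tot; and (ii) for every commuting square v ∘ e = m ∘ u with e : X → Option (M × Y₁) in Surj ∩ Inj ∩ Inv, m : Y₂ → Option (M × Z) in Tot, u : X → Option (M × Y₂) and v : Y₁ → Option (M × Z), there is a unique d : Y₁ → Option (M × Y₂) with d ∘ e = u and m ∘ d = v. -/

import Mathlib

/-- Kleisli composition for the monad `T_M X = Option (M × X)`. -/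
def KlComp {M : Type} [Monoid M] {X Y Z : Type}
    (g : Y → Option (M × Z)) (f : X → Option (M × Y)) : X → Option (M × Z) :=
  fun x => (f x).bind fun p => (g p.2).map fun q => (p.1 * q.1, q.2)

/-- The Kleisli identity on `X`. -/
def KlId (M : Type) [Monoid M] (X : Type) : X → Option (M × X) :=
  fun x => some (1, x)

/-- A Kleisli morphism is an isomorphism when it has a two-sided inverse. -/
def IsKlIso {M : Type} [Monoid M] {X Y : Type} (f : X → Option (M × Y)) : Prop :=
  ∃ g : Y → Option (M × X), KlComp g f = KlId M X ∧ KlComp f g = KlId M Y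

/-- The class `Surj` of Kleisli morphisms. -/
def KlSurj {M X Y : Type} (f : X → Option (M × Y)) : Prop :=
  ∀ y : Y, ∃ (x : X) (υ : M), f x = some (υ, y)

/-- The class `Inj` of Kleisli morphisms. -/
def KlInj {M X Y : Type} (f : X → Option (M × Y)) : Prop :=
  ∀ (x x' : X) (υ υ' : M) (y : Y), f x = some (υ, y) → f x' = some (υ', y) → x = x'

/-- The class `Tot` of Kleisli morphisms. -/
def KlTot {M X Y : Type} (f : X → Option (M × Y)) : Prop :=
  ∀ x : X, f x ≠ none

/-- The class `Inv` of Kleisli morphisms. -/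
def KlInv {M : Type} [Monoid M] {X Y : Type} (f : X → Option (M × Y)) : Prop :=
  ∀ (x : X) (υ : M) (y : Y), f x = some (υ, y) → IsUnit υ

theorem factorization_system_E1_M1 (M : Type) [Monoid M] :
    (∀ (X Z : Type) (f : X → Option (M × Z)),
      ∃ (Y : Type) (e : X → Option (M × Y)) (m : Y → Option (M × Z)),
        KlComp m e = f ∧ (KlSurj e ∧ KlInj e ∧ KlInv e) ∧ KlTot m) ∧
    (∀ (X Y₁ Y₂ Z : Type) (e : X → Option (M × Y₁)) (m : Y₂ → Option (M × Z))
        (u : X → Option (M × Y₂)) (v : Y₁ → Option (M × Z)),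
      KlSurj e → KlInj e → KlInv e → KlTot m →
      KlComp v e = KlComp m u →
      ∃! d : Y₁ → Option (M × Y₂), KlComp d e = u ∧ KlComp m d = v) := by
  classical
  constructor
  · -- existence of factorization
    intro X Z f
    refine ⟨{x : X // f x ≠ none},
      (fun x => if h : f x = none then none else some (1, ⟨x, h⟩)),
      (fun y => f y.1), ?_, ⟨?_, ?_, ?_⟩, ?_⟩
    · funext x
      by_cases h : f x = none
      · simp [KlComp, h]
      · obtain ⟨⟨υ, z⟩, hz⟩ := Option.ne_none_iff_exists'.mp h
        simp [KlComp, h, hz]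
    · intro y
      exact ⟨y.1, 1, by simp [y.2]⟩
    · intro x x' υ υ' y hx hx'
      by_cases h : f x = none
      · simp [h] at hx
      · by_cases h' : f x' = none
        · simp [h'] at hx'
        · simp [h] at hx
          simp [h'] at hx'
          have : (⟨x, h⟩ : {x : X // f x ≠ none}) = ⟨x', h'⟩ := by
            rw [hx.2, hx'.2]
          exact congrArg Subtype.val this
    · intro x υ y hx
      by_cases h : f x = none
      · simp [h] at hx
      · simp [h] at hx
        exact hx.1 ▸ isUnit_one
    · intro y
      exact y.2
  · -- orthogonality
    intro X Y₁ Y₂ Z e m u v hS hI hV hT hsq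
    choose x0 υ0 hx0 using hS
    have hunit : ∀ y₁, IsUnit (υ0 y₁) := fun y₁ => hV _ _ _ (hx0 y₁)
    choose w hw using hunit
    have hnone : ∀ x, e x = none → u x = none := by
      intro x hx
      have h := congrFun hsq x
      simp only [KlComp, hx, Option.bind_none] at h
      cases hu : u x with
      | none => rfl
      | some p =>
        rw [hu] at h
        simp only [Option.bind_some] at h
        cases hm : m p.2 with
        | none => exact absurd hm (hT p.2)
        | some q => rw [hm] at h; simp at h
    set d : Y₁ → Option (M × Y₂) :=
      fun y₁ => (u (x0 y₁)).map fun q => ((((w y₁)⁻¹ : Mˣ) : M) * q.1, q.2) with hd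
    have key : ∀ (d' : Y₁ → Option (M × Y₂)), KlComp d' e = u → d' = d := by
      intro d' hd'
      funext y₁
      have h := congrFun hd' (x0 y₁)
      simp only [KlComp, hx0 y₁, Option.bind_some] at h
      cases hdy : d' y₁ with
      | none =>
        rw [hdy, Option.map_none] at h
        simp [hd, ← h]
      | some p =>
        rw [hdy, Option.map_some] at h
        simp [hd, ← h, ← hw y₁]
    refine ⟨d, ⟨?_, ?_⟩, fun d' hd' => key d' hd'.1⟩
    · -- KlComp d e = u
      funext x'
      cases he : e x' with
      | none => simp [KlComp, he, hnone x' he]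
      | some p =>
        obtain ⟨υ', y₁⟩ := p
        have hx : x' = x0 y₁ := hI x' (x0 y₁) υ' (υ0 y₁) y₁ he (hx0 y₁)
        rw [hx] at he
        rw [hx0 y₁] at he
        have hυ : υ' = υ0 y₁ := congrArg (fun o => (Option.getD o (υ0 y₁, y₁)).1) he.symm
        rw [hx]
        simp only [KlComp, hx0 y₁, Option.bind_some, hd]
        cases hu : u (x0 y₁) with
        | none => simp
        | some q =>
          simp only [Option.map_some, Option.some_inj]
          rw [← hw y₁, Units.mul_inv_cancel_left]
    · -- KlComp m d = v
      funext y₁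
      have h := congrFun hsq (x0 y₁)
      simp only [KlComp, hx0 y₁, Option.bind_some] at h
      cases hu : u (x0 y₁) with
      | none =>
        rw [hu] at h
        simp only [Option.bind_none] at h
        cases hv : v y₁ with
        | none => simp [KlComp, hd, hu]
        | some r => rw [hv] at h; simp at h
      | some p =>
        rw [hu] at h
        simp only [Option.bind_some] at h
        cases hm : m p.2 with
        | none => exact absurd hm (hT p.2)
        | some q =>
          rw [hm] at h
          simp only [Option.map_some] at h
          cases hv : v y₁ with
          | none => rw [hv] at h; simp at h
          | some r =>
            rw [hv] at h
            simp only [Option.map_some, Option.some_inj] at h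
            simp only [KlComp, hd, hu, Option.map_some, Option.bind_some, hm,
              Option.some_inj]
            have h1 : υ0 y₁ * r.1 = p.1 * q.1 := (Prod.ext_iff.mp h).1
            have h2 : r.2 = q.2 := (Prod.ext_iff.mp h).2
            have hr : r.1 = (((w y₁)⁻¹ : Mˣ) : M) * (p.1 * q.1) := by
              rw [← h1, ← hw y₁, Units.inv_mul_cancel_left]
            rw [mul_assoc, ← hr, ← h2]
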